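/- Let M be a simple matroid of rank r with 3r-3-δ elements where 0 ≤ δ ≤ r-2, in which every line has at most 3 elements, the characteristic roots of M are all integers, and χ(M;2) = 0. Then M has at least 3r-5-2δ three-point lines. -/

import Mathlib

open Finset Polynomial

section MatroidDefs

variable {α : Type} [Fintype α] [DecidableEq α]

/-- The rank of a set `X` in a matroid `M`: the largest size of an independent subset
of `X`. -/
noncomputable def mrk (M : Matroid α) (X : Set α) : ℕ :=
  sSup {n | ∃ I, M.Indep I ∧ I ⊆ X ∧ I.ncard = n}

/-- A matroid is simple if every pair of elements of the ground set is independent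
(equivalently, it has no loops and no parallel pairs). -/
def mSimple (M : Matroid α) : Prop :=
  ∀ e f, e ∈ M.E → f ∈ M.E → M.Indep {e, f}

/-- The characteristic polynomial of a matroid on the ground set `α`, via the Whitney
rank expansion `χ(M;λ) = Σ_{A ⊆ E} (-1)^{|A|} λ^{r(E) - r(A)}` (which agrees with the
Möbius-function definition for loopless matroids). -/
noncomputable def charPoly (M : Matroid α) : Polynomial ℤ :=
  ∑ A : Finset α, C ((-1 : ℤ) ^ A.card) * X ^ (mrk M Set.univ - mrk M (A : Set α))

/-- The number of lines (rank-2 flats) of `M` with exactly `k` points. -/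
noncomputable def lineCount (M : Matroid α) (k : ℕ) : ℕ :=
  Nat.card {F : Set α | M.IsFlat F ∧ mrk M F = 2 ∧ F.ncard = k}

/-- Every line (rank-2 flat) of `M` has at most 3 points. -/
def linesAtMost3 (M : Matroid α) : Prop :=
  ∀ F : Set α, M.IsFlat F → mrk M F = 2 → F.ncard ≤ 3

/-- An integer polynomial has only real roots. -/
def onlyRealRoots (p : Polynomial ℤ) : Prop :=
  (p.map (Int.castRingHom ℝ)).Splits

/-- An integer polynomial has only integral roots: every complex root is an integer. -/
def onlyIntegerRoots (p : Polynomial ℤ) : Prop :=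
  ∀ z ∈ (p.map (Int.castRingHom ℂ)).roots, ∃ k : ℤ, z = (k : ℂ)

/-- A matroid is connected if no proper nonempty subset of the ground set gives an
additive separation of the rank. -/
def mConnected (M : Matroid α) : Prop :=
  M.E.Nonempty ∧ ∀ A : Set α, A ⊆ M.E → A.Nonempty → (M.E \ A).Nonempty →
    mrk M A + mrk M (M.E \ A) ≠ mrk M M.E

/-- A flat `X` of `M` is modular if every line `L` with
`rank(X ∨ L) = rank(X) + 1` meets `X`. -/
def modularFlat (M : Matroid α) (Y : Set α) : Prop :=
  M.IsFlat Y ∧ ∀ L : Set α, M.IsFlat L → mrk M L = 2 →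
    mrk M (Y ∪ L) = mrk M Y + 1 → (Y ∩ L).Nonempty

end MatroidDefs


set_option linter.unusedSectionVars false
set_option linter.unusedVariables false
set_option maxHeartbeats 1000000
open scoped Classical

namespace Stmt12Aux

variable {α : Type} [Fintype α] [DecidableEq α] {M : Matroid α}

lemma mrk_eq_of_basis (hE : M.E = Set.univ) {I X : Set α} (hI : M.IsBasis I X) :
    mrk M X = I.ncard := by
  have hXE : X ⊆ M.E := by rw [hE]; exact Set.subset_univ X
  refine IsGreatest.csSup_eq ⟨⟨I, hI.indep, hI.subset, rfl⟩, ?_⟩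
  rintro n ⟨J, hJ, hJX, rfl⟩
  obtain ⟨J', hJ', hJJ'⟩ := hJ.subset_isBasis_of_subset hJX hXE
  have h2 : J'.ncard = I.ncard := by
    have h := hJ'.encard_eq_encard hI
    simp [Set.ncard_def, h]
  exact h2 ▸ Set.ncard_le_ncard hJJ' (Set.toFinite _)

lemma exists_basis' (hE : M.E = Set.univ) (X : Set α) : ∃ I, M.IsBasis I X :=
  M.exists_isBasis X (by rw [hE]; exact Set.subset_univ X)

lemma mrk_indep (hE : M.E = Set.univ) {I : Set α} (hI : M.Indep I) : mrk M I = I.ncard :=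
  mrk_eq_of_basis hE hI.isBasis_self

lemma ncard_le_mrk (hE : M.E = Set.univ) {I X : Set α} (hI : M.Indep I) (hIX : I ⊆ X) :
    I.ncard ≤ mrk M X := by
  obtain ⟨J, hJ, hIJ⟩ := hI.subset_isBasis_of_subset hIX (by rw [hE]; exact Set.subset_univ X)
  rw [mrk_eq_of_basis hE hJ]
  exact Set.ncard_le_ncard hIJ (Set.toFinite _)

lemma mrk_mono (hE : M.E = Set.univ) {X Y : Set α} (h : X ⊆ Y) : mrk M X ≤ mrk M Y := by
  obtain ⟨I, hI⟩ := exists_basis' hE X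
  rw [mrk_eq_of_basis hE hI]
  exact ncard_le_mrk hE hI.indep (hI.subset.trans h)

lemma mrk_le_ncard (hE : M.E = Set.univ) (X : Set α) : mrk M X ≤ X.ncard := by
  obtain ⟨I, hI⟩ := exists_basis' hE X
  rw [mrk_eq_of_basis hE hI]
  exact Set.ncard_le_ncard hI.subset (Set.toFinite _)

lemma mrk_closure (hE : M.E = Set.univ) (X : Set α) : mrk M (M.closure X) = mrk M X := by
  obtain ⟨I, hI⟩ := exists_basis' hE X
  rw [mrk_eq_of_basis hE hI, mrk_eq_of_basis hE hI.isBasis_closure_right]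

lemma flat_closure (M : Matroid α) (X : Set α) : M.IsFlat (M.closure X) := by
  refine ⟨fun I X' hI hIX' => ?_, M.closure_subset_ground X⟩
  have h1 : X' ⊆ M.closure I := hIX'.subset_closure
  have h2 : M.closure I = M.closure X := by
    rw [hI.closure_eq_closure, Matroid.closure_closure]
  rwa [h2] at h1

lemma indep_pair (hE : M.E = Set.univ) (hs : mSimple M) (a b : α) : M.Indep {a, b} :=
  hs a b (by rw [hE]; trivial) (by rw [hE]; trivial)

lemma indep_singleton' (hE : M.E = Set.univ) (hs : mSimple M) (a : α) : M.Indep {a} := by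
  have h := indep_pair hE hs a a
  simpa using h

lemma two_le_mrk (hE : M.E = Set.univ) (hs : mSimple M) {X : Set α} {a b : α}
    (ha : a ∈ X) (hb : b ∈ X) (hab : a ≠ b) : 2 ≤ mrk M X := by
  have h := ncard_le_mrk hE (indep_pair hE hs a b) (by
    intro x hx; rcases hx with h | h <;> subst h <;> assumption)
  rwa [Set.ncard_pair hab] at h

lemma one_le_mrk (hE : M.E = Set.univ) (hs : mSimple M) {X : Set α} {a : α} (ha : a ∈ X) :
    1 ≤ mrk M X := by
  have h := ncard_le_mrk hE (indep_singleton' hE hs a) (by simpa using ha)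
  simpa using h

lemma mrk_empty (hE : M.E = Set.univ) : mrk M (∅ : Set α) = 0 := by
  simpa using mrk_indep hE M.empty_indep

lemma mrk_eq_zero_iff (hE : M.E = Set.univ) (hs : mSimple M) {X : Set α} :
    mrk M X = 0 ↔ X = ∅ := by
  constructor
  · intro h
    by_contra hne
    obtain ⟨a, ha⟩ := Set.nonempty_iff_ne_empty.2 hne
    have := one_le_mrk hE hs ha
    omega
  · rintro rfl; exact mrk_empty hE

lemma mrk_eq_one_iff (hE : M.E = Set.univ) (hs : mSimple M) {X : Set α} :
    mrk M X = 1 ↔ X.ncard = 1 := by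
  constructor
  · intro h
    have hne : X ≠ ∅ := by
      intro h0; rw [(mrk_eq_zero_iff hE hs).2 h0] at h; omega
    obtain ⟨a, ha⟩ := Set.nonempty_iff_ne_empty.2 hne
    have hsub : X ⊆ {a} := by
      intro b hb
      by_contra hba
      have := two_le_mrk hE hs hb ha (by simpa using hba)
      omega
    have : X = {a} := Set.Subset.antisymm hsub (by simpa using ha)
    simp [this]
  · intro h
    obtain ⟨a, rfl⟩ := Set.ncard_eq_one.1 h
    rw [mrk_indep hE (indep_singleton' hE hs a)]
    simp

lemma mrk_pair (hE : M.E = Set.univ) (hs : mSimple M) {a b : α} (hab : a ≠ b) :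
    mrk M {a, b} = 2 := by
  rw [mrk_indep hE (indep_pair hE hs a b), Set.ncard_pair hab]

-- key flat lemma
lemma flat_eq_of_subset (hE : M.E = Set.univ) {F G : Set α} (hF : M.IsFlat F) (hG : M.IsFlat G)
    (hGF : G ⊆ F) (hrk : mrk M F ≤ mrk M G) : G = F := by
  obtain ⟨I, hI⟩ := exists_basis' hE G
  obtain ⟨J, hJ, hIJ⟩ := hI.indep.subset_isBasis_of_subset (hI.subset.trans hGF)
    (by rw [hE]; exact Set.subset_univ F)
  have hIJeq : I = J := by
    apply Set.eq_of_subset_of_ncard_le hIJ _ (Set.toFinite _)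
    rw [← mrk_eq_of_basis hE hI, ← mrk_eq_of_basis hE hJ]
    exact hrk
  subst hIJeq
  have h1 : F ⊆ M.closure I := hJ.subset_closure
  have h2 : M.closure I = G := by
    rw [hI.closure_eq_closure, hG.closure]
  exact Set.Subset.antisymm hGF (by rw [← h2]; exact h1)

lemma line_closure_pair (hE : M.E = Set.univ) (hs : mSimple M) {F : Set α} {a b : α}
    (hF : M.IsFlat F) (hF2 : mrk M F = 2) (ha : a ∈ F) (hb : b ∈ F) (hab : a ≠ b) :
    M.closure {a, b} = F := by
  apply flat_eq_of_subset hE hF (flat_closure M _)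
  · have : ({a, b} : Set α) ⊆ F := by
      intro x hx; rcases hx with h | h <;> subst h <;> assumption
    have h2 := M.closure_subset_closure this
    rwa [hF.closure] at h2
  · rw [mrk_closure hE, mrk_pair hE hs hab, hF2]

/-- The lines of `M` as a Finset of Finsets. -/
noncomputable def flines (M : Matroid α) : Finset (Finset α) :=
  Finset.univ.filter (fun F : Finset α => M.IsFlat ↑F ∧ mrk M ↑F = 2)

/-- The line spanned by a set. -/
noncomputable def lineOf (M : Matroid α) (A : Finset α) : Finset α :=
  (Set.toFinite (M.closure ↑A)).toFinset

lemma coe_lineOf (A : Finset α) : (lineOf M A : Set α) = M.closure ↑A :=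
  Set.Finite.coe_toFinset _

lemma mem_flines {F : Finset α} : F ∈ flines M ↔ M.IsFlat ↑F ∧ mrk M ↑F = 2 := by
  simp [flines]

lemma two_le_mrk_coe (hE : M.E = Set.univ) (hs : mSimple M) {A : Finset α} (h2 : 2 ≤ A.card) :
    2 ≤ mrk M ↑A := by
  obtain ⟨a, ha, b, hb, hab⟩ := Finset.one_lt_card.1 h2
  exact two_le_mrk hE hs (by simpa using ha) (by simpa using hb) hab

lemma lineOf_mem_flines (hE : M.E = Set.univ) {A : Finset α} (hA : mrk M ↑A = 2) :
    lineOf M A ∈ flines M := by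
  rw [mem_flines]
  constructor
  · rw [coe_lineOf]; exact flat_closure M ↑A
  · rw [coe_lineOf, mrk_closure hE, hA]

lemma subset_lineOf (hE : M.E = Set.univ) (A : Finset α) : A ⊆ lineOf M A := by
  intro x hx
  have : (x : α) ∈ M.closure ↑A := M.mem_closure_of_mem (by simpa using hx)
    (by rw [hE]; exact Set.subset_univ _)
  simpa [lineOf] using this

lemma lineOf_eq_iff (hE : M.E = Set.univ) (hs : mSimple M) {A F : Finset α}
    (hA : mrk M ↑A = 2) (hF : F ∈ flines M) : lineOf M A = F ↔ A ⊆ F := by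
  rw [mem_flines] at hF
  constructor
  · rintro rfl; exact subset_lineOf hE A
  · intro hAF
    apply Finset.coe_injective
    rw [coe_lineOf]
    apply flat_eq_of_subset hE hF.1 (flat_closure M _)
    · have h2 := M.closure_subset_closure (show (A : Set α) ⊆ ↑F by exact_mod_cast hAF)
      rwa [hF.1.closure] at h2
    · rw [mrk_closure hE, hA, hF.2]

lemma card_flines_lb (hE : M.E = Set.univ) {F : Finset α} (hF : F ∈ flines M) :
    2 ≤ F.card := by
  rw [mem_flines] at hF
  have := mrk_le_ncard hE (F : Set α)
  rw [hF.2, Set.ncard_coe_finset] at this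
  omega

lemma card_flines_ub (hE : M.E = Set.univ) (hl : linesAtMost3 M) {F : Finset α}
    (hF : F ∈ flines M) : F.card ≤ 3 := by
  rw [mem_flines] at hF
  have := hl ↑F hF.1 hF.2
  rwa [Set.ncard_coe_finset] at this

-- fiber over F of the rank-2 sets
lemma fiber_rank2 (hE : M.E = Set.univ) (hs : mSimple M) {F : Finset α} (hF : F ∈ flines M) :
    (Finset.univ.filter (fun A : Finset α => mrk M ↑A = 2)).filter (fun A => lineOf M A = F)
      = F.powerset.filter (fun A => 2 ≤ A.card) := by
  ext A
  simp only [Finset.mem_filter, Finset.mem_univ, true_and, Finset.mem_powerset]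
  constructor
  · rintro ⟨hA, hl⟩
    refine ⟨(lineOf_eq_iff hE hs hA hF).1 hl, ?_⟩
    have := mrk_le_ncard hE (A : Set α)
    rw [hA, Set.ncard_coe_finset] at this
    omega
  · rintro ⟨hAF, h2⟩
    have hge := two_le_mrk_coe hE hs h2
    have hle : mrk M ↑A ≤ 2 := by
      have := mrk_mono hE (show (A : Set α) ⊆ ↑F by exact_mod_cast hAF)
      rw [(mem_flines.1 hF).2] at this
      exact this
    have hA : mrk M ↑A = 2 := le_antisymm hle hge
    exact ⟨hA, (lineOf_eq_iff hE hs hA hF).2 hAF⟩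

lemma fiber_pairs (hE : M.E = Set.univ) (hs : mSimple M) {F : Finset α} (hF : F ∈ flines M) :
    ((Finset.univ : Finset α).powersetCard 2).filter (fun A => lineOf M A = F)
      = F.powersetCard 2 := by
  ext A
  simp only [Finset.mem_filter, Finset.mem_powersetCard, Finset.subset_univ, true_and]
  constructor
  · rintro ⟨h2, hl⟩
    have hA : mrk M ↑A = 2 := by
      obtain ⟨a, b, hab, rfl⟩ := Finset.card_eq_two.1 h2
      have : (({a, b} : Finset α) : Set α) = ({a, b} : Set α) := by simp
      rw [this, mrk_pair hE hs hab]
    exact ⟨(lineOf_eq_iff hE hs hA hF).1 hl, h2⟩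
  · rintro ⟨hAF, h2⟩
    have hA : mrk M ↑A = 2 := by
      obtain ⟨a, b, hab, rfl⟩ := Finset.card_eq_two.1 h2
      have : (({a, b} : Finset α) : Set α) = ({a, b} : Set α) := by simp
      rw [this, mrk_pair hE hs hab]
    exact ⟨h2, (lineOf_eq_iff hE hs hA hF).2 hAF⟩

-- rank-2 sets map into lines
lemma pairs_count (hE : M.E = Set.univ) (hs : mSimple M) :
    (Fintype.card α).choose 2 = ∑ F ∈ flines M, (F.card).choose 2 := by
  have h := Finset.card_eq_sum_card_fiberwise (f := lineOf M)
    (s := (Finset.univ : Finset α).powersetCard 2) (t := flines M) ?_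
  · rw [Finset.card_powersetCard, Finset.card_univ] at h
    rw [h]
    apply Finset.sum_congr rfl
    intro F hF
    rw [fiber_pairs hE hs hF, Finset.card_powersetCard]
  · intro A hA
    rw [Finset.mem_coe, Finset.mem_powersetCard_univ] at hA
    have hA2 : mrk M ↑A = 2 := by
      obtain ⟨a, b, hab, rfl⟩ := Finset.card_eq_two.1 hA
      have : (({a, b} : Finset α) : Set α) = ({a, b} : Set α) := by simp
      rw [this, mrk_pair hE hs hab]
    exact lineOf_mem_flines hE hA2

lemma altInnerSum {F : Finset α} (hF2 : 2 ≤ F.card) :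
    ∑ A ∈ F.powerset.filter (fun A => 2 ≤ A.card), (-1 : ℤ)^A.card = (F.card : ℤ) - 1 := by
  have h0 : ∑ A ∈ F.powerset, (-1 : ℤ)^A.card = 0 :=
    Finset.sum_powerset_neg_one_pow_card_of_nonempty (Finset.card_pos.1 (by omega))
  have hsplit := Finset.sum_filter_add_sum_filter_not F.powerset (fun A => 2 ≤ A.card)
    (fun A => (-1 : ℤ)^A.card)
  have hsmall : ∑ A ∈ F.powerset.filter (fun A => ¬ 2 ≤ A.card), (-1 : ℤ)^A.card
      = 1 - (F.card : ℤ) := by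
    have key : ∀ A ∈ F.powerset, (if ¬ 2 ≤ A.card then (-1 : ℤ)^A.card else 0)
        = (if A.card = 0 then (-1 : ℤ)^A.card else 0)
          + (if A.card = 1 then (-1 : ℤ)^A.card else 0) := by
      intro A _
      rcases hc : A.card with _ | c
      · simp
      · rcases c with _ | c
        · simp
        · have h1 : ¬ (c + 1 + 1 = 0) := by omega
          have h2 : ¬ (c + 1 + 1 = 1) := by omega
          have h3 : 2 ≤ c + 1 + 1 := by omega
          simp [h1, h2, h3]
    rw [Finset.sum_filter]
    rw [Finset.sum_congr rfl key]
    rw [Finset.sum_add_distrib, ← Finset.sum_filter, ← Finset.sum_filter]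
    have e0 : F.powerset.filter (fun A => A.card = 0) = Finset.powersetCard 0 F := by
      rw [Finset.powersetCard_eq_filter]
    have e1 : F.powerset.filter (fun A => A.card = 1) = Finset.powersetCard 1 F := by
      rw [Finset.powersetCard_eq_filter]
    rw [e0, e1, Finset.powersetCard_zero, Finset.powersetCard_one]
    simp [Finset.sum_map]
    ring
  linarith

lemma sum_rank2 (hE : M.E = Set.univ) (hs : mSimple M) :
    ∑ A ∈ Finset.univ.filter (fun A : Finset α => mrk M ↑A = 2), (-1 : ℤ)^A.card
      = ∑ F ∈ flines M, ((F.card : ℤ) - 1) := by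
  rw [← Finset.sum_fiberwise_of_maps_to (g := lineOf M) (t := flines M)
    (fun A hA => lineOf_mem_flines hE (Finset.mem_filter.1 hA).2)]
  apply Finset.sum_congr rfl
  intro F hF
  rw [fiber_rank2 hE hs hF, altInnerSum (card_flines_lb hE hF)]

lemma mrk_le_univ (hE : M.E = Set.univ) (A : Finset α) {r : ℕ} (hr : mrk M Set.univ = r) :
    mrk M ↑A ≤ r := hr ▸ mrk_mono hE (Set.subset_univ _)

lemma coeff_charPoly (M : Matroid α) (n : ℕ) :
    (charPoly M).coeff n
      = ∑ A : Finset α, (-1 : ℤ)^A.card * (if n = mrk M Set.univ - mrk M ↑A then 1 else 0) := by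
  rw [charPoly, Polynomial.finset_sum_coeff]
  apply Finset.sum_congr rfl
  intro A _
  rw [Polynomial.coeff_C_mul, Polynomial.coeff_X_pow]

lemma coeff_step (hE : M.E = Set.univ) {r : ℕ} (hr : mrk M Set.univ = r) (k : ℕ) (hk : k ≤ r) :
    (charPoly M).coeff (r - k)
      = ∑ A ∈ Finset.univ.filter (fun A : Finset α => mrk M ↑A = k), (-1 : ℤ)^A.card := by
  rw [coeff_charPoly]
  rw [Finset.sum_filter]
  apply Finset.sum_congr rfl
  intro A _
  have hle := mrk_le_univ hE A hr
  by_cases h : mrk M ↑A = k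
  · simp [h, hr]
  · have : ¬ (r - k = r - mrk M ↑A) := by omega
    simp [h, hr, this]

lemma coeff_r (hE : M.E = Set.univ) (hs : mSimple M) {r : ℕ} (hr : mrk M Set.univ = r)
    (hr1 : 1 ≤ r) : (charPoly M).coeff r = 1 := by
  have h := coeff_step hE hr 0 (by omega)
  rw [Nat.sub_zero] at h
  rw [h]
  have hfil : Finset.univ.filter (fun A : Finset α => mrk M ↑A = 0) = {∅} := by
    ext A
    simp only [Finset.mem_filter, Finset.mem_univ, true_and, Finset.mem_singleton]
    rw [mrk_eq_zero_iff hE hs]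
    simp
  rw [hfil]
  simp

lemma coeff_r1 (hE : M.E = Set.univ) (hs : mSimple M) {r : ℕ} (hr : mrk M Set.univ = r)
    (hr1 : 1 ≤ r) : (charPoly M).coeff (r - 1) = -(Fintype.card α : ℤ) := by
  rw [coeff_step hE hr 1 hr1]
  have hfil : Finset.univ.filter (fun A : Finset α => mrk M ↑A = 1)
      = Finset.univ.powersetCard 1 := by
    ext A
    simp only [Finset.mem_filter, Finset.mem_univ, true_and, Finset.mem_powersetCard_univ]
    rw [mrk_eq_one_iff hE hs, Set.ncard_coe_finset]
  rw [hfil]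
  have : ∀ A ∈ (Finset.univ : Finset α).powersetCard 1, (-1 : ℤ)^A.card = -1 := by
    intro A hA
    rw [Finset.mem_powersetCard_univ] at hA
    rw [hA]; ring
  rw [Finset.sum_congr rfl this, Finset.sum_const, Finset.card_powersetCard, Finset.card_univ,
    Nat.choose_one_right]
  simp [mul_comm]

lemma coeff_r2 (hE : M.E = Set.univ) (hs : mSimple M) (hl : linesAtMost3 M) {r : ℕ}
    (hr : mrk M Set.univ = r) (hr2 : 2 ≤ r) :
    (charPoly M).coeff (r - 2)
      = ((Fintype.card α).choose 2 : ℤ)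
        - (((flines M).filter (fun F => F.card = 3)).card : ℤ) := by
  rw [coeff_step hE hr 2 hr2, sum_rank2 hE hs]
  have key : ∀ F ∈ flines M,
      ((F.card : ℤ) - 1) = (F.card.choose 2 : ℤ) - (if F.card = 3 then 1 else 0) := by
    intro F hF
    have h2 := card_flines_lb hE hF
    have h3 := card_flines_ub hE hl hF
    interval_cases h : F.card <;> simp <;> norm_num
  rw [Finset.sum_congr rfl key, Finset.sum_sub_distrib]
  congr 1
  · rw [← Nat.cast_sum, ← pairs_count hE hs]
  · rw [Finset.sum_boole]

lemma coeff_large (hE : M.E = Set.univ) {r : ℕ} (hr : mrk M Set.univ = r) {n : ℕ} (hn : r < n) :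
    (charPoly M).coeff n = 0 := by
  rw [coeff_charPoly]
  apply Finset.sum_eq_zero
  intro A _
  have := mrk_le_univ hE A hr
  have : ¬ (n = mrk M Set.univ - mrk M ↑A) := by rw [hr]; omega
  simp [this]

lemma natDegree_charPoly (hE : M.E = Set.univ) (hs : mSimple M) {r : ℕ}
    (hr : mrk M Set.univ = r) (hr1 : 1 ≤ r) : (charPoly M).natDegree = r := by
  apply le_antisymm
  · apply Polynomial.natDegree_le_iff_coeff_eq_zero.2
    intro n hn
    exact coeff_large hE hr hn
  · apply Polynomial.le_natDegree_of_ne_zero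
    rw [coeff_r hE hs hr hr1]
    norm_num

lemma monic_charPoly (hE : M.E = Set.univ) (hs : mSimple M) {r : ℕ}
    (hr : mrk M Set.univ = r) (hr1 : 1 ≤ r) : (charPoly M).Monic := by
  unfold Polynomial.Monic Polynomial.leadingCoeff
  rw [natDegree_charPoly hE hs hr hr1, coeff_r hE hs hr hr1]

lemma eval_one_charPoly (M : Matroid α) [Nonempty α] : (charPoly M).eval 1 = 0 := by
  unfold charPoly
  rw [Polynomial.eval_finset_sum]
  simp only [Polynomial.eval_mul, Polynomial.eval_C, Polynomial.eval_pow, Polynomial.eval_X,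
    one_pow, mul_one]
  rw [← Finset.powerset_univ]
  exact Finset.sum_powerset_neg_one_pow_card_of_nonempty Finset.univ_nonempty

lemma lineCount_eq (M : Matroid α) :
    lineCount M 3 = ((flines M).filter (fun F => F.card = 3)).card := by
  rw [lineCount, Nat.card_coe_set_eq]
  have himg : {F : Set α | M.IsFlat F ∧ mrk M F = 2 ∧ F.ncard = 3}
      = (fun F : Finset α => (F : Set α)) '' ↑((flines M).filter (fun F => F.card = 3)) := by
    ext X
    simp only [Set.mem_setOf_eq, Set.mem_image, Finset.mem_coe, Finset.mem_filter, mem_flines]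
    constructor
    · rintro ⟨h1, h2, h3⟩
      refine ⟨(Set.toFinite X).toFinset, ⟨⟨?_, ?_⟩, ?_⟩, Set.Finite.coe_toFinset _⟩
      · rw [Set.Finite.coe_toFinset]; exact h1
      · rw [Set.Finite.coe_toFinset]; exact h2
      · rw [← h3, Set.ncard_eq_toFinset_card X (Set.toFinite X)]
    · rintro ⟨F, ⟨⟨h1, h2⟩, h3⟩, rfl⟩
      exact ⟨h1, h2, by rw [Set.ncard_coe_finset]; exact h3⟩
  rw [himg, Set.ncard_image_of_injective _ Finset.coe_injective, Set.ncard_coe_finset]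


lemma exists_multiset_of_monic_int_roots :
    ∀ (n : ℕ) (p : Polynomial ℤ), p.natDegree = n → p.Monic → onlyIntegerRoots p →
      ∃ s : Multiset ℤ, Multiset.card s = n ∧ p = (s.map (fun a => X - C a)).prod := by
  intro n
  induction n with
  | zero =>
    intro p hdeg hmonic _
    exact ⟨0, rfl, by simpa using (hmonic.natDegree_eq_zero.1 hdeg)⟩
  | succ n ih =>
    intro p hdeg hmonic hroots
    set q := p.map (Int.castRingHom ℂ) with hq
    have hqmonic : q.Monic := hmonic.map _
    have hqdeg : q.natDegree = n + 1 := by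
      rw [hq, hmonic.natDegree_map]
      exact hdeg
    have hqne : q ≠ 0 := hqmonic.ne_zero
    obtain ⟨z, hz⟩ := IsAlgClosed.exists_root q (by
      rw [Polynomial.degree_eq_natDegree hqne, hqdeg]
      intro hcon
      exact_mod_cast hcon)
    have hzmem : z ∈ q.roots := by
      rw [Polynomial.mem_roots hqne]
      exact hz
    obtain ⟨k, rfl⟩ := hroots z hzmem
    have hk : p.eval k = 0 := by
      have h1 : q.eval ((Int.castRingHom ℂ) k) = (Int.castRingHom ℂ) (p.eval k) := by
        rw [hq, Polynomial.eval_map, Polynomial.eval₂_hom]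
      have h2 : q.eval ((k : ℤ) : ℂ) = 0 := hz
      rw [show ((Int.castRingHom ℂ) k) = ((k : ℤ) : ℂ) from rfl, h2] at h1
      have h3 : ((p.eval k : ℤ) : ℂ) = (0 : ℂ) := by
        have := h1.symm
        simpa [map_intCast] using this
      exact_mod_cast h3
    obtain ⟨p', hp'⟩ := (Polynomial.dvd_iff_isRoot.2 hk)
    have hp'monic : p'.Monic := (Polynomial.monic_X_sub_C k).of_mul_monic_left (hp' ▸ hmonic)
    have hp'deg : p'.natDegree = n := by
      have := hdeg
      rw [hp', Polynomial.natDegree_mul (Polynomial.X_sub_C_ne_zero k) hp'monic.ne_zero,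
        Polynomial.natDegree_X_sub_C] at this
      omega
    have hp'roots : onlyIntegerRoots p' := by
      intro z hzmem'
      apply hroots
      have hmap : q = ((X : Polynomial ℂ) - C ((k : ℤ) : ℂ)) * p'.map (Int.castRingHom ℂ) := by
        rw [hq, hp', Polynomial.map_mul]
        congr 1
        simp
      rw [← hq, hmap, Polynomial.roots_mul (by rw [← hmap]; exact hqne)]
      rw [Multiset.mem_add]
      exact Or.inr hzmem'
    obtain ⟨s, hcard, hfac⟩ := ih p' hp'deg hp'monic hp'roots
    refine ⟨k ::ₘ s, by simp [hcard], ?_⟩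
    rw [Multiset.map_cons, Multiset.prod_cons, hp', hfac]

lemma esymm_one_int (s : Multiset ℤ) : s.esymm 1 = s.sum := by
  rw [Multiset.esymm, Multiset.powersetCard_one]
  rw [Multiset.map_map]
  simp

lemma esymm_two_cons (a : ℤ) (s : Multiset ℤ) :
    (a ::ₘ s).esymm 2 = a * s.sum + s.esymm 2 := by
  rw [Multiset.esymm, Multiset.powersetCard_cons, Multiset.map_add, Multiset.sum_add,
    Multiset.map_map]
  have h1 : ((Multiset.powersetCard 1 s).map (Multiset.prod ∘ Multiset.cons a)).sum
      = a * s.sum := by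
    have : (Multiset.prod ∘ Multiset.cons a) = fun t : Multiset ℤ => a * t.prod := by
      funext t
      simp [Multiset.prod_cons]
    rw [this, Multiset.sum_map_mul_left]
    rw [show ((Multiset.powersetCard 1 s).map Multiset.prod).sum = s.esymm 1 from rfl,
      esymm_one_int]
  rw [h1, Multiset.esymm]
  ring

lemma sq_sum_eq (s : Multiset ℤ) :
    s.sum ^ 2 = (s.map (fun a => a ^ 2)).sum + 2 * s.esymm 2 := by
  induction s using Multiset.induction_on with
  | empty => simp [Multiset.esymm, Multiset.powersetCard_zero_right]
  | cons a s ih =>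
    rw [Multiset.sum_cons, Multiset.map_cons, Multiset.sum_cons, esymm_two_cons]
    ring_nf
    ring_nf at ih
    linarith

lemma T_identity (s : Multiset ℤ) :
    (s.map (fun a => (a - 2) * (a - 3))).sum
      = (s.map (fun a => a ^ 2)).sum - 5 * s.sum + 6 * Multiset.card s := by
  induction s using Multiset.induction_on with
  | empty => simp
  | cons a s ih =>
    simp only [Multiset.map_cons, Multiset.sum_cons, Multiset.card_cons, ih]
    push_cast
    ring

lemma term_nonneg (a : ℤ) : 0 ≤ (a - 2) * (a - 3) := by
  rcases le_or_gt a 2 with h | h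
  · nlinarith
  · have h3 : 3 ≤ a := h
    nlinarith

lemma T_lb {s : Multiset ℤ} (h1 : (1 : ℤ) ∈ s) :
    2 ≤ (s.map (fun a => (a - 2) * (a - 3))).sum := by
  obtain ⟨t, rfl⟩ := Multiset.exists_cons_of_mem h1
  rw [Multiset.map_cons, Multiset.sum_cons]
  have : (0 : ℤ) ≤ (t.map (fun a => (a - 2) * (a - 3))).sum := by
    apply Multiset.sum_nonneg
    intro x hx
    obtain ⟨a, _, rfl⟩ := Multiset.mem_map.1 hx
    exact term_nonneg a
  norm_num
  linarith

lemma one_mem_of_eval_one {s : Multiset ℤ} (h : ((s.map (fun a => X - C a)).prod).eval 1 = 0) :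
    (1 : ℤ) ∈ s := by
  rw [Polynomial.eval_multiset_prod, Multiset.map_map] at h
  have h0 : (0 : ℤ) ∈ s.map (fun a => Polynomial.eval 1 (X - C a)) := by
    rw [← Multiset.prod_eq_zero_iff]
    simpa using h
  obtain ⟨a, ha, ha0⟩ := Multiset.mem_map.1 h0
  simp only [Polynomial.eval_sub, Polynomial.eval_X, Polynomial.eval_C] at ha0
  have : a = 1 := by omega
  rwa [← this]

lemma two_mul_choose_two (n : ℕ) : 2 * n.choose 2 = n * (n - 1) := by
  induction n with
  | zero => rfl
  | succ m ih =>
    rw [Nat.choose_succ_succ, Nat.choose_one_right, Nat.mul_add, ih]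
    rcases m with _ | m
    · rfl
    · simp [Nat.succ_sub_one]
      ring


end Stmt12Aux


/-- Let `M` be a simple matroid of rank `r` with `3r - 3 - δ`
elements where `0 ≤ δ ≤ r - 2`, in which every line has at most 3 elements, the
characteristic roots of `M` are all integers, and `χ(M;2) = 0`.  Then `M` has at least
`3r - 5 - 2δ` three-point lines. -/

theorem stmt12 {α : Type} [Fintype α] [DecidableEq α] (M : Matroid α)
    (hE : M.E = Set.univ) (hsimple : mSimple M)
    (r δ : ℕ) (hr : mrk M Set.univ = r)
    (hδ : δ + 2 ≤ r)
    (hcard : Fintype.card α + 3 + δ = 3 * r)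
    (hlines : linesAtMost3 M)
    (hint : onlyIntegerRoots (charPoly M))
    (h2 : (charPoly M).eval 2 = 0) :
    3 * r ≤ lineCount M 3 + 5 + 2 * δ := by
  classical
  open Stmt12Aux in
  have hr1 : 1 ≤ r := by omega
  have hr2 : 2 ≤ r := by omega
  have hepos : 0 < Fintype.card α := by omega
  have hne : Nonempty α := Fintype.card_pos_iff.1 hepos
  set e := Fintype.card α with he
  have hmono := monic_charPoly hE hsimple hr hr1
  have hdeg := natDegree_charPoly hE hsimple hr hr1
  obtain ⟨s, hcards, hfac⟩ :=
    exists_multiset_of_monic_int_roots r (charPoly M) hdeg hmono hint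
  -- the coefficient of degree r-1
  have hc1 : (charPoly M).coeff (r - 1) = -(e : ℤ) := coeff_r1 hE hsimple hr hr1
  have hc2 : (charPoly M).coeff (r - 2)
      = (e.choose 2 : ℤ) - ((lineCount M 3 : ℕ) : ℤ) := by
    rw [coeff_r2 hE hsimple hlines hr hr2, lineCount_eq]
  -- extract esymm values
  have hv1 := Multiset.prod_X_sub_C_coeff s (show r - 1 ≤ Multiset.card s by omega)
  have hv2 := Multiset.prod_X_sub_C_coeff s (show r - 2 ≤ Multiset.card s by omega)
  rw [hcards] at hv1 hv2
  rw [show r - (r - 1) = 1 by omega] at hv1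
  rw [show r - (r - 2) = 2 by omega] at hv2
  rw [← hfac, hc1, esymm_one_int] at hv1
  rw [← hfac, hc2] at hv2
  have hsum : s.sum = (e : ℤ) := by
    have : -(e : ℤ) = -s.sum := by rw [hv1]; ring
    linarith
  have hesymm2 : s.esymm 2 = (e.choose 2 : ℤ) - ((lineCount M 3 : ℕ) : ℤ) := by
    have : ((-1 : ℤ)) ^ 2 * s.esymm 2 = s.esymm 2 := by ring
    rw [this] at hv2
    linarith [hv2]
  -- 1 is a root
  have h1mem : (1 : ℤ) ∈ s := by
    apply one_mem_of_eval_one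
    rw [← hfac]
    exact eval_one_charPoly M
  -- numeric part
  have hsq := sq_sum_eq s
  have hT := T_identity s
  have hTlb := T_lb h1mem
  have hch : 2 * (e.choose 2 : ℤ) = (e : ℤ) * ((e : ℤ) - 1) := by
    have h := two_mul_choose_two e
    have h1 : ((2 * e.choose 2 : ℕ) : ℤ) = ((e * (e - 1) : ℕ) : ℤ) := by exact_mod_cast h
    push_cast [Nat.cast_sub (show 1 ≤ e by omega)] at h1
    push_cast
    linarith
  rw [hsum, hesymm2] at hsq
  rw [hcards] at hT
  rw [hT] at hTlb
  have hcard' : (e : ℤ) + 3 + (δ : ℤ) = 3 * (r : ℤ) := by exact_mod_cast hcard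
  have goal' : 3 * (r : ℤ) ≤ ((lineCount M 3 : ℕ) : ℤ) + 5 + 2 * (δ : ℤ) := by
    nlinarith [hsq, hTlb, hch, hcard']
  exact_mod_cast goal'
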